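/- arXiv:1802.02384 — 4 statements merged into one kernel-verified Lean document; each statement's English description precedes it below -/
import Mathlib

section
/- For real matrices A and B, the Moore–Penrose pseudo-inverse of their Kronecker product equals the Kronecker product of their pseudo-inverses: (A ⊗ B)† = A† ⊗ B†. -/
open Matrix Kronecker

/-- `B` satisfies the four Moore–Penrose conditions for `A`. -/
def IsMoorePenrose {m n : Type*} [Fintype m] [Fintype n]
    (A : Matrix m n ℝ) (B : Matrix n m ℝ) : Prop :=
  A * B * A = A ∧ B * A * B = B ∧ (A * B)ᵀ = A * B ∧ (B * A)ᵀ = B * A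

lemma mp_unique {m n : Type*} [Fintype m] [Fintype n]
    (M : Matrix m n ℝ) (X Y : Matrix n m ℝ)
    (hX : IsMoorePenrose M X) (hY : IsMoorePenrose M Y) : X = Y := by
  obtain ⟨hX1, hX2, hX3, hX4⟩ := hX
  obtain ⟨hY1, hY2, hY3, hY4⟩ := hY
  have h1 : X = X * M * Y := by
    calc X = X * M * X := hX2.symm
    _ = X * (M * X)ᵀ := by rw [hX3, Matrix.mul_assoc]
    _ = X * (M * Y * M * X)ᵀ := by rw [hY1]
    _ = X * (M * X)ᵀ * (M * Y)ᵀ := by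
        rw [Matrix.mul_assoc (M * Y) M X, Matrix.transpose_mul, Matrix.mul_assoc]
    _ = X * (M * X) * (M * Y) := by rw [hX3, hY3]
    _ = X * M * Y := by rw [← Matrix.mul_assoc, ← Matrix.mul_assoc, hX2]
  have h2 : Y = X * M * Y := by
    calc Y = Y * M * Y := hY2.symm
    _ = (Y * M)ᵀ * Y := by rw [hY4]
    _ = (Y * M * (X * M))ᵀ * Y := by
        rw [Matrix.mul_assoc Y M (X * M), ← Matrix.mul_assoc M X M, hX1]
    _ = (X * M)ᵀ * (Y * M)ᵀ * Y := by rw [Matrix.transpose_mul]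
    _ = X * M * (Y * M) * Y := by rw [hX4, hY4]
    _ = X * M * Y := by rw [Matrix.mul_assoc (X * M) (Y * M) Y, hY2]
  rw [h1, ← h2]

/-- The Moore–Penrose pseudo-inverse of a Kronecker product is the Kronecker
product of the pseudo-inverses: `(A ⊗ₖ B)† = A† ⊗ₖ B†`. -/
theorem pinv_kronecker {m n p q : Type*} [Fintype m] [Fintype n] [Fintype p] [Fintype q]
    (A : Matrix m n ℝ) (B : Matrix p q ℝ)
    (A' : Matrix n m ℝ) (B' : Matrix q p ℝ) (C : Matrix (n × q) (m × p) ℝ)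
    (hA : IsMoorePenrose A A') (hB : IsMoorePenrose B B')
    (hC : IsMoorePenrose (A ⊗ₖ B) C) :
    C = A' ⊗ₖ B' := by
  obtain ⟨hA1, hA2, hA3, hA4⟩ := hA
  obtain ⟨hB1, hB2, hB3, hB4⟩ := hB
  refine mp_unique (A ⊗ₖ B) C (A' ⊗ₖ B') hC ?_
  refine ⟨?_, ?_, ?_, ?_⟩
  · rw [← Matrix.mul_kronecker_mul, ← Matrix.mul_kronecker_mul, hA1, hB1]
  · rw [← Matrix.mul_kronecker_mul, ← Matrix.mul_kronecker_mul, hA2, hB2]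
  · rw [← Matrix.mul_kronecker_mul, ← Matrix.kroneckerMap_transpose, hA3, hB3]
  · rw [← Matrix.mul_kronecker_mul, ← Matrix.kroneckerMap_transpose, hA4, hB4]
end

section
/- Let C, D ∈ ℝ^{n×n} be symmetric positive semidefinite and suppose Γ = C + D. Then for any ψ ∈ R(D), one has ψᵀ Γ† ψ ≤ ψᵀ D† ψ. (In particular, adding a PSD matrix inside the pseudo-inverse can only decrease the quadratic form on the range of D.) -/
open Matrix

lemma mp_unique_s7 {m n : Type*} [Fintype m] [Fintype n]
    (A : Matrix m n ℝ) (B B' : Matrix n m ℝ)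
    (h : IsMoorePenrose A B) (h' : IsMoorePenrose A B') : B = B' := by
  obtain ⟨h1, h2, h3, h4⟩ := h
  obtain ⟨h1', h2', h3', h4'⟩ := h'
  have hAB : A * B = A * B' := by
    calc A * B = (A * B)ᵀ := h3.symm
    _ = Bᵀ * Aᵀ := by rw [transpose_mul]
    _ = Bᵀ * (A * B' * A)ᵀ := by rw [h1']
    _ = Bᵀ * (Aᵀ * (A * B')ᵀ) := by rw [transpose_mul]
    _ = Bᵀ * (Aᵀ * (A * B')) := by rw [h3']
    _ = (Bᵀ * Aᵀ) * (A * B') := by rw [Matrix.mul_assoc]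
    _ = (A * B)ᵀ * (A * B') := by rw [transpose_mul]
    _ = (A * B) * (A * B') := by rw [h3]
    _ = (A * B * A) * B' := by rw [Matrix.mul_assoc, ← Matrix.mul_assoc B A B',
      ← Matrix.mul_assoc, ← Matrix.mul_assoc]
    _ = A * B' := by rw [h1]
  have hBA : B * A = B' * A := by
    calc B * A = (B * A)ᵀ := h4.symm
    _ = Aᵀ * Bᵀ := by rw [transpose_mul]
    _ = (A * (B' * A))ᵀ * Bᵀ := by rw [← Matrix.mul_assoc, h1']
    _ = ((B' * A)ᵀ * Aᵀ) * Bᵀ := by rw [transpose_mul]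
    _ = ((B' * A) * Aᵀ) * Bᵀ := by rw [h4']
    _ = (B' * A) * (Aᵀ * Bᵀ) := by rw [Matrix.mul_assoc]
    _ = (B' * A) * (B * A)ᵀ := by rw [← transpose_mul]
    _ = (B' * A) * (B * A) := by rw [h4]
    _ = B' * (A * B * A) := by rw [Matrix.mul_assoc, ← Matrix.mul_assoc A B A]
    _ = B' * A := by rw [h1]
  calc B = B * A * B := h2.symm
  _ = B' * A * B := by rw [hBA]
  _ = B' * (A * B') := by rw [Matrix.mul_assoc, hAB]
  _ = B' := by rw [← Matrix.mul_assoc, h2']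

lemma mp_transpose {m : Type*} [Fintype m]
    (A : Matrix m m ℝ) (B : Matrix m m ℝ) (hA : Aᵀ = A)
    (h : IsMoorePenrose A B) : IsMoorePenrose A Bᵀ := by
  obtain ⟨h1, h2, h3, h4⟩ := h
  have c3' : A * Bᵀ = B * A := by
    calc A * Bᵀ = Aᵀ * Bᵀ := by rw [hA]
    _ = (B * A)ᵀ := (transpose_mul _ _).symm
    _ = B * A := h4
  have c4' : Bᵀ * A = A * B := by
    calc Bᵀ * A = Bᵀ * Aᵀ := by rw [hA]
    _ = (A * B)ᵀ := (transpose_mul _ _).symm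
    _ = A * B := h3
  refine ⟨?_, ?_, ?_, ?_⟩
  · have t1 := congrArg Matrix.transpose h1
    simp only [transpose_mul, hA] at t1
    rw [Matrix.mul_assoc]
    exact t1
  · have t2 := congrArg Matrix.transpose h2
    simp only [transpose_mul, hA] at t2
    rw [Matrix.mul_assoc]
    exact t2
  · rw [c3']; exact h4
  · rw [c4']; exact h3

/-- For symmetric PSD `C, D` and `ψ ∈ R(D)`, `ψᵀ(C+D)†ψ ≤ ψᵀD†ψ`. -/
theorem quad_form_pinv_add_le {n : ℕ}
    (C D G Dp : Matrix (Fin n) (Fin n) ℝ) (ψ : Fin n → ℝ)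
    (hC : C.PosSemidef) (hD : D.PosSemidef)
    (hG : IsMoorePenrose (C + D) G) (hDp : IsMoorePenrose D Dp)
    (hψ : ψ ∈ LinearMap.range D.mulVecLin) :
    ψ ⬝ᵥ (G *ᵥ ψ) ≤ ψ ⬝ᵥ (Dp *ᵥ ψ) := by
  obtain ⟨x, hx⟩ := hψ
  rw [mulVecLin_apply] at hx
  have hDsym : Dᵀ = D := by
    have := hD.1
    rwa [Matrix.IsHermitian, conjTranspose_eq_transpose_of_trivial] at this
  have hCsym : Cᵀ = C := by
    have := hC.1
    rwa [Matrix.IsHermitian, conjTranspose_eq_transpose_of_trivial] at this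
  have hΓsym : (C + D)ᵀ = C + D := by rw [transpose_add, hCsym, hDsym]
  have hGsym : Gᵀ = G := mp_unique_s7 (C + D) Gᵀ G (mp_transpose _ _ hΓsym hG) hG
  set u : Fin n → ℝ := G *ᵥ ψ with hu
  -- generic dot/mulVec adjoint fact
  have adj : ∀ (M : Matrix (Fin n) (Fin n) ℝ) (a b : Fin n → ℝ),
      (M *ᵥ a) ⬝ᵥ b = a ⬝ᵥ (Mᵀ *ᵥ b) := by
    intro M a b
    rw [dotProduct_comm, dotProduct_mulVec, ← mulVec_transpose, dotProduct_comm]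
  have key1 : ψ ⬝ᵥ (Dp *ᵥ ψ) = x ⬝ᵥ (D *ᵥ x) := by
    conv_lhs => rw [← hx]
    rw [adj, hDsym, mulVec_mulVec, mulVec_mulVec, hDp.1]
  have key2 : u ⬝ᵥ ((C + D) *ᵥ u) = ψ ⬝ᵥ (G *ᵥ ψ) := by
    rw [hu, adj, hGsym, mulVec_mulVec, mulVec_mulVec, hG.2.1]
  have key3 : u ⬝ᵥ (D *ᵥ x) = ψ ⬝ᵥ (G *ᵥ ψ) := by
    rw [hx, hu, adj, hGsym]
  have hCu : 0 ≤ u ⬝ᵥ (C *ᵥ u) := by simpa using hC.dotProduct_mulVec_nonneg u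
  have hDu : u ⬝ᵥ (D *ᵥ u) ≤ ψ ⬝ᵥ (G *ᵥ ψ) := by
    have expand : u ⬝ᵥ ((C + D) *ᵥ u) = u ⬝ᵥ (C *ᵥ u) + u ⬝ᵥ (D *ᵥ u) := by
      rw [add_mulVec, dotProduct_add]
    rw [expand] at key2
    linarith
  have hxDu : x ⬝ᵥ (D *ᵥ u) = ψ ⬝ᵥ (G *ᵥ ψ) := by
    rw [← key3, dotProduct_mulVec, ← mulVec_transpose, hDsym, dotProduct_comm]
  have hsq : 0 ≤ (x - u) ⬝ᵥ (D *ᵥ (x - u)) := by simpa using hD.dotProduct_mulVec_nonneg (x - u)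
  have expand2 : (x - u) ⬝ᵥ (D *ᵥ (x - u)) =
      x ⬝ᵥ (D *ᵥ x) - x ⬝ᵥ (D *ᵥ u) - (u ⬝ᵥ (D *ᵥ x) - u ⬝ᵥ (D *ᵥ u)) := by
    simp only [mulVec_sub, dotProduct_sub, sub_dotProduct]
    ring
  rw [expand2, hxDu, key3] at hsq
  rw [key1]
  linarith
end

section
/- Let C ∈ ℝ^{n×n} be symmetric positive semidefinite, D ∈ ℝ^{n×n} symmetric positive definite, and ψ ∈ ℝ^n with ψᵀD⁻¹ψ ≠ 0. Then the ratio ψᵀ(C + L·D)⁻¹ψ / (ψᵀ(L·D)⁻¹ψ) tends to 1 as L → ∞. -/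
open Matrix Filter

lemma psd_smul {n : ℕ} {C : Matrix (Fin n) (Fin n) ℝ} (hC : C.PosSemidef)
    {c : ℝ} (hc : 0 ≤ c) : (c • C).PosSemidef := by
  refine ⟨?_, fun x => ?_⟩
  · unfold Matrix.IsHermitian
    rw [conjTranspose_smul, hC.1.eq]
    simp
  · exact (hC.smul hc).2 x

/-- For `C` symmetric PSD, `D` symmetric positive definite, and `ψ` with
`ψᵀD⁻¹ψ ≠ 0`, the ratio `ψᵀ(C + L·D)⁻¹ψ / ψᵀ(L·D)⁻¹ψ` tends to `1` as `L → ∞`. -/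
theorem ratio_tendsto_one {n : ℕ}
    (C D : Matrix (Fin n) (Fin n) ℝ) (ψ : Fin n → ℝ)
    (hC : C.PosSemidef) (hD : D.PosDef)
    (hψ : ψ ⬝ᵥ (D⁻¹ *ᵥ ψ) ≠ 0) :
    Tendsto
      (fun L : ℕ =>
        (ψ ⬝ᵥ ((C + (L : ℝ) • D)⁻¹ *ᵥ ψ)) / (ψ ⬝ᵥ (((L : ℝ) • D)⁻¹ *ᵥ ψ)))
      atTop (nhds 1) := by
  set d : ℝ := ψ ⬝ᵥ (D⁻¹ *ᵥ ψ) with hd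
  -- Step 1: the rescaled matrices tend to D
  have h1 : Tendsto (fun L : ℕ => ((L : ℝ)⁻¹ • C + D)) atTop (nhds D) := by
    have h0 : Tendsto (fun L : ℕ => ((L : ℝ)⁻¹ • C)) atTop (nhds ((0 : ℝ) • C)) := by
      exact (tendsto_inv_atTop_nhds_zero_nat.smul_const C)
    simpa using h0.add tendsto_const_nhds
  -- Step 2: inverses tend to D⁻¹
  have hDdet : IsUnit D.det := isUnit_iff_ne_zero.mpr (ne_of_gt hD.det_pos)
  have hinv : ContinuousAt Inv.inv D :=
    continuousAt_matrix_inv D (NormedRing.inverse_continuousAt hDdet.unit)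
  have h2 : Tendsto (fun L : ℕ => ((L : ℝ)⁻¹ • C + D)⁻¹) atTop (nhds D⁻¹) :=
    hinv.tendsto.comp h1
  -- Step 3: quadratic form tends to d
  have hquad : Continuous (fun M : Matrix (Fin n) (Fin n) ℝ => ψ ⬝ᵥ (M *ᵥ ψ)) :=
    Continuous.dotProduct continuous_const
      (Continuous.matrix_mulVec continuous_id continuous_const)
  have h3 : Tendsto (fun L : ℕ => ψ ⬝ᵥ (((L : ℝ)⁻¹ • C + D)⁻¹ *ᵥ ψ)) atTop (nhds d) :=
    hquad.continuousAt.tendsto.comp h2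
  have h4 : Tendsto (fun L : ℕ => (ψ ⬝ᵥ (((L : ℝ)⁻¹ • C + D)⁻¹ *ᵥ ψ)) / d)
      atTop (nhds 1) := by
    have := h3.div_const d
    rwa [div_self hψ] at this
  refine h4.congr' ?_
  filter_upwards [eventually_ge_atTop 1] with L hL
  have hLpos : (0 : ℝ) < (L : ℝ) := by exact_mod_cast Nat.lt_of_lt_of_le Nat.zero_lt_one hL
  have hLne : (L : ℝ) ≠ 0 := ne_of_gt hLpos
  -- positive definiteness of the rescaled matrix
  have hPD : ((L : ℝ)⁻¹ • C + D).PosDef :=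
    Matrix.PosDef.posSemidef_add (psd_smul hC (inv_nonneg.mpr hLpos.le)) hD
  have hPDdet : IsUnit ((L : ℝ)⁻¹ • C + D).det :=
    isUnit_iff_ne_zero.mpr (ne_of_gt hPD.det_pos)
  -- rewrite C + L • D as L • ((L⁻¹) • C + D)
  have hkey : C + (L : ℝ) • D = (L : ℝ) • ((L : ℝ)⁻¹ • C + D) := by
    rw [smul_add, smul_smul, mul_inv_cancel₀ hLne, one_smul]
  have hLunit : IsUnit (L : ℝ) := isUnit_iff_ne_zero.mpr hLne
  have hinv1 : (C + (L : ℝ) • D)⁻¹ = (L : ℝ)⁻¹ • ((L : ℝ)⁻¹ • C + D)⁻¹ := by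
    rw [hkey]
    have : ((hLunit.unit : ℝˣ) • ((L : ℝ)⁻¹ • C + D))⁻¹
        = (hLunit.unit)⁻¹ • ((L : ℝ)⁻¹ • C + D)⁻¹ :=
      Matrix.inv_smul' _ hLunit.unit hPDdet
    simpa [Units.smul_def] using this
  have hinv2 : ((L : ℝ) • D)⁻¹ = (L : ℝ)⁻¹ • D⁻¹ := by
    have : ((hLunit.unit : ℝˣ) • D)⁻¹ = (hLunit.unit)⁻¹ • D⁻¹ :=
      Matrix.inv_smul' _ hLunit.unit hDdet
    simpa [Units.smul_def] using this
  rw [hinv1, hinv2, smul_mulVec, smul_mulVec, dotProduct_smul, dotProduct_smul,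
    smul_eq_mul, smul_eq_mul, mul_div_mul_left _ _ (inv_ne_zero hLne)]
end

section
/- Let B ∈ ℝ^{(M−1)×(M−1)} be symmetric positive definite, ρ, σ > 0, and set Γ = (1/ρ²) vec(I) vec(I)ᵀ + I_{M−1} ⊗ B ∈ ℝ^{(M−1)²×(M−1)²} (with B positive definite so Γ is invertible). Then vec(I)ᵀ Γ⁻¹ vec(I) = (1/ρ² + 1/Tr(B⁻¹))⁻¹. -/
open Matrix Kronecker

/-- Column-stacking vectorization of a matrix: `vec A (j, i) = A i j`. -/
def vec {n m : Type*} (A : Matrix n m ℝ) : m × n → ℝ := fun p => A p.2 p.1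

section aux

variable {r : ℕ}

lemma kron_mulVec_vec (M N : Matrix (Fin r) (Fin r) ℝ) :
    ((1 : Matrix (Fin r) (Fin r) ℝ) ⊗ₖ M) *ᵥ _root_.vec N = _root_.vec (M * N) := by
  ext ⟨j, i⟩
  simp [Matrix.mulVec, dotProduct, _root_.vec, Fintype.sum_prod_type, Matrix.mul_apply,
    Matrix.one_apply, kroneckerMap_apply, ite_mul, mul_comm]

lemma vecOne_dot (N : Matrix (Fin r) (Fin r) ℝ) :
    _root_.vec (1 : Matrix (Fin r) (Fin r) ℝ) ⬝ᵥ _root_.vec N = N.trace := by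
  simp [dotProduct, _root_.vec, Fintype.sum_prod_type, Matrix.one_apply, Matrix.trace,
    Matrix.diag, ite_mul]

lemma vmv_mul {ι : Type*} [Fintype ι] (a b : ι → ℝ) (M : Matrix ι ι ℝ) :
    vecMulVec a b * M = vecMulVec a (b ᵥ* M) := by
  ext i j
  simp [Matrix.mul_apply, Matrix.vecMulVec_apply, Matrix.vecMul, dotProduct,
    Finset.mul_sum, mul_assoc]

lemma mul_vmv {ι : Type*} [Fintype ι] (a b : ι → ℝ) (M : Matrix ι ι ℝ) :
    M * vecMulVec a b = vecMulVec (M *ᵥ a) b := by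
  ext i j
  simp [Matrix.mul_apply, Matrix.vecMulVec_apply, Matrix.mulVec, dotProduct,
    Finset.sum_mul, mul_assoc]

lemma vmv_mulVec {ι : Type*} [Fintype ι] (a b x : ι → ℝ) :
    vecMulVec a b *ᵥ x = (b ⬝ᵥ x) • a := by
  ext i
  simp only [Matrix.mulVec, dotProduct, Matrix.vecMulVec_apply, Pi.smul_apply,
    smul_eq_mul, Finset.sum_mul]
  exact Finset.sum_congr rfl fun _ _ => by ring

lemma vecMul_vmv {ι : Type*} [Fintype ι] (a b x : ι → ℝ) :
    x ᵥ* vecMulVec a b = (x ⬝ᵥ a) • b := by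
  ext j
  simp only [Matrix.vecMul, dotProduct, Matrix.vecMulVec_apply, Pi.smul_apply,
    smul_eq_mul, Finset.sum_mul]
  exact Finset.sum_congr rfl fun _ _ => by ring

lemma vmv_smul_right {ι : Type*} (a b : ι → ℝ) (s : ℝ) :
    vecMulVec a (s • b) = s • vecMulVec a b := by
  ext i j
  simp [Matrix.vecMulVec_apply]; ring

end aux

/-- For `B` symmetric positive definite and
`Γ = (1/ρ²) vec(I) vec(I)ᵀ + I ⊗ B`, one has
`vec(I)ᵀ Γ⁻¹ vec(I) = (1/ρ² + 1/Tr(B⁻¹))⁻¹`. -/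
theorem lu_ccrb_closed_form {r : ℕ} (hr : 0 < r)
    (B : Matrix (Fin r) (Fin r) ℝ) (ρ σ : ℝ)
    (hB : B.PosDef) (hρ : 0 < ρ) (hσ : 0 < σ) :
    letI w : Fin r × Fin r → ℝ := _root_.vec (1 : Matrix (Fin r) (Fin r) ℝ)
    letI Γ : Matrix (Fin r × Fin r) (Fin r × Fin r) ℝ :=
      (ρ ^ 2)⁻¹ • vecMulVec w w + (1 : Matrix (Fin r) (Fin r) ℝ) ⊗ₖ B
    w ⬝ᵥ (Γ⁻¹ *ᵥ w) = ((ρ ^ 2)⁻¹ + (B⁻¹.trace)⁻¹)⁻¹ := by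
  haveI : Nonempty (Fin r) := ⟨⟨0, hr⟩⟩
  show _root_.vec (1 : Matrix (Fin r) (Fin r) ℝ) ⬝ᵥ
      (((ρ ^ 2)⁻¹ • vecMulVec (_root_.vec (1 : Matrix (Fin r) (Fin r) ℝ))
          (_root_.vec (1 : Matrix (Fin r) (Fin r) ℝ)) +
        (1 : Matrix (Fin r) (Fin r) ℝ) ⊗ₖ B)⁻¹ *ᵥ _root_.vec (1 : Matrix (Fin r) (Fin r) ℝ)) =
      ((ρ ^ 2)⁻¹ + (B⁻¹.trace)⁻¹)⁻¹
  set w : Fin r × Fin r → ℝ := _root_.vec (1 : Matrix (Fin r) (Fin r) ℝ) with hw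
  have hBinv : (B⁻¹).PosDef := hB.inv
  have hBdet : IsUnit B.det := (Matrix.isUnit_iff_isUnit_det B).mp hB.isUnit
  have hBt : B⁻¹ᵀ = B⁻¹ := by
    rw [Matrix.transpose_nonsing_inv]
    congr 1
    simpa using hB.1.eq
  have hdiag : ∀ i, 0 < B⁻¹ i i := fun i => hBinv.diag_pos
  have ht : 0 < B⁻¹.trace := Finset.sum_pos (fun i _ => hdiag i) Finset.univ_nonempty
  set t := B⁻¹.trace with htdef
  set c := (ρ ^ 2)⁻¹ with hc
  have hc0 : 0 < c := by rw [hc]; positivity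
  have hden : 0 < 1 + c * t := by positivity
  set k := c / (1 + c * t) with hk
  set u : Fin r × Fin r → ℝ := _root_.vec B⁻¹ with hu
  set S := (1 : Matrix (Fin r) (Fin r) ℝ) ⊗ₖ B⁻¹ with hS
  set A := (1 : Matrix (Fin r) (Fin r) ℝ) ⊗ₖ B with hA
  have hAS : A * S = 1 := by
    rw [hA, hS, ← Matrix.mul_kronecker_mul, Matrix.one_mul,
      Matrix.mul_nonsing_inv _ hBdet, Matrix.one_kronecker_one]
  have hSw : S *ᵥ w = u := by
    rw [hS, hw, hu, kron_mulVec_vec, Matrix.mul_one]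
  have hAu : A *ᵥ u = w := by
    rw [hA, hu, hw, kron_mulVec_vec, Matrix.mul_nonsing_inv _ hBdet]
  have hwu : w ⬝ᵥ u = t := by rw [hw, hu, htdef]; exact vecOne_dot _
  have hSt : Sᵀ = S := by
    rw [hS, ← Matrix.kroneckerMap_transpose, Matrix.transpose_one, hBt]
  have hwS : w ᵥ* S = u := by
    rw [← Matrix.mulVec_transpose, hSt, hSw]
  set G : Matrix (Fin r × Fin r) (Fin r × Fin r) ℝ := S - k • vecMulVec u u with hG
  have hΓG : (c • vecMulVec w w + A) * G = 1 := by
    rw [hG, Matrix.mul_sub, Matrix.add_mul, Matrix.add_mul, Matrix.smul_mul, Matrix.smul_mul, hAS,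
      Matrix.mul_smul, Matrix.mul_smul, vmv_mul, hwS, vmv_mul, vecMul_vmv, hwu,
      mul_vmv, hAu, vmv_smul_right]
    have h1 : c • vecMulVec w u + 1 - (c • k • t • vecMulVec w u + k • vecMulVec w u)
        = (c - (c * k * t + k)) • vecMulVec w u + 1 := by module
    have hk0 : c - (c * k * t + k) = 0 := by
      rw [hk]; field_simp; ring
    rw [h1, hk0, zero_smul, zero_add]
  have hinv : (c • vecMulVec w w + A)⁻¹ = G := Matrix.inv_eq_right_inv hΓG
  rw [hinv, hG, Matrix.sub_mulVec, hSw, Matrix.smul_mulVec, vmv_mulVec,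
    dotProduct_comm u w, hwu]
  rw [dotProduct_sub, hwu, dotProduct_smul, dotProduct_smul, hwu, hk]
  rw [smul_eq_mul, smul_eq_mul]
  have ht0 : t ≠ 0 := ne_of_gt ht
  have hden0 : 1 + c * t ≠ 0 := ne_of_gt hden
  have hct0 : c + t⁻¹ ≠ 0 := by positivity
  field_simp
  ring
end
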